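/- If e is an edge of a finite simple graph G with both endpoints of degree at least 2, and deleting e disconnects G (e is a bridge with each side containing another edge), then removing the vertex e from the line graph L(G) disconnects L(G); hence L(G) is not 2-connected. -/

import Mathlib

open SimpleGraph

/-- A graph is 2-connected: at least 3 vertices, and deleting any single vertex leaves a
connected graph. -/
def TwoConnected {W : Type*} (H : SimpleGraph W) : Prop :=
  3 ≤ Nat.card W ∧ ∀ w : W, (H.induce {x : W | x ≠ w}).Connected

/-- If `e = uv` is a bridge of a finite connected graph `G` with both endpoints of degree
at least 2, then deleting the vertex `e` from the line graph disconnects it; hence the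
line graph is not 2-connected. -/
theorem stmt_4 {V : Type*} [Fintype V] (G : SimpleGraph V) (hG : G.Connected)
    (u v : V) (huv : G.Adj u v)
    (hu : 2 ≤ (G.neighborSet u).ncard) (hv : 2 ≤ (G.neighborSet v).ncard)
    (hbridge : ¬ (G.deleteEdges {s(u, v)}).Connected) :
    ¬ (G.lineGraph.induce {f : G.edgeSet | (f : Sym2 V) ≠ s(u, v)}).Connected ∧
      ¬ TwoConnected G.lineGraph := by
  set G' := G.deleteEdges {s(u, v)} with hG'
  -- helper: endpoints of an edge of G' are reachable in G'
  have reach_mem : ∀ (f : Sym2 V), f ∈ G'.edgeSet → ∀ y z, y ∈ f → z ∈ f →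
      G'.Reachable y z := by
    intro f hf y z hy hz
    induction f with
    | h a b =>
      rw [Sym2.mem_iff] at hy hz
      rw [SimpleGraph.mem_edgeSet] at hf
      rcases hy with rfl | rfl <;> rcases hz with rfl | rfl
      · exact Reachable.refl _
      · exact hf.reachable
      · exact hf.symm.reachable
      · exact Reachable.refl _
  -- edges other than s(u,v) are edges of G'
  have mem_G' : ∀ (f : G.edgeSet), (f : Sym2 V) ≠ s(u, v) → (f : Sym2 V) ∈ G'.edgeSet := by
    intro f hf
    rw [hG', SimpleGraph.edgeSet_deleteEdges]
    exact ⟨f.2, by simpa using hf⟩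
  -- find a neighbor of u other than v
  have hwex : ∃ w ∈ G.neighborSet u, w ≠ v := by
    by_contra h
    push_neg at h
    have hsub : G.neighborSet u ⊆ {v} := fun y hy => h y hy
    have := Set.ncard_le_ncard hsub (Set.finite_singleton v)
    rw [Set.ncard_singleton] at this
    omega
  have hxex : ∃ x ∈ G.neighborSet v, x ≠ u := by
    by_contra h
    push_neg at h
    have hsub : G.neighborSet v ⊆ {u} := fun y hy => h y hy
    have := Set.ncard_le_ncard hsub (Set.finite_singleton u)
    rw [Set.ncard_singleton] at this
    omega
  obtain ⟨w, hw, hwv⟩ := hwex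
  obtain ⟨x, hx, hxu⟩ := hxex
  have hne1 : (s(u, w) : Sym2 V) ≠ s(u, v) := by
    intro h
    rcases Sym2.eq_iff.mp h with ⟨-, h2⟩ | ⟨h1, -⟩
    · exact hwv h2
    · exact G.ne_of_adj huv h1
  have hne2 : (s(v, x) : Sym2 V) ≠ s(u, v) := by
    intro h
    rcases Sym2.eq_iff.mp h with ⟨h1, -⟩ | ⟨-, h2⟩
    · exact huv.ne' h1
    · exact hxu h2
  have he1 : (s(u, w) : Sym2 V) ∈ G.edgeSet := hw
  have he2 : (s(v, x) : Sym2 V) ∈ G.edgeSet := hx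
  have key : ¬ (G.lineGraph.induce {f : G.edgeSet | (f : Sym2 V) ≠ s(u, v)}).Connected := by
    intro hconn
    set S := {f : G.edgeSet | (f : Sym2 V) ≠ s(u, v)} with hS
    set a : S := ⟨⟨s(u, w), he1⟩, hne1⟩ with ha
    set b : S := ⟨⟨s(v, x), he2⟩, hne2⟩ with hb
    have hreach := hconn.preconnected a b
    -- invariant: some endpoint reachable from u in G'
    have invar : ∀ c d : S, (G.lineGraph.induce S).Adj c d →
        (∃ y ∈ ((c : G.edgeSet) : Sym2 V), G'.Reachable u y) →
        ∃ y ∈ ((d : G.edgeSet) : Sym2 V), G'.Reachable u y := by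
      intro c d hcd ⟨y, hy, hry⟩
      have hadj : G.lineGraph.Adj (c : G.edgeSet) (d : G.edgeSet) := hcd
      rw [SimpleGraph.lineGraph_adj_iff_exists] at hadj
      obtain ⟨-, z, hzc, hzd⟩ := hadj
      exact ⟨z, hzd, hry.trans (reach_mem _ (mem_G' _ c.2) y z hy hzc)⟩
    have trans : ∀ c d : S, (G.lineGraph.induce S).Walk c d →
        (∃ y ∈ ((c : G.edgeSet) : Sym2 V), G'.Reachable u y) →
        ∃ y ∈ ((d : G.edgeSet) : Sym2 V), G'.Reachable u y := by
      intro c d p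
      induction p with
      | nil => exact id
      | cons h p ih => exact fun hc => ih (invar _ _ h hc)
    have huv' : G'.Reachable u v := by
      obtain ⟨p⟩ := hreach
      have := trans a b p ⟨u, by simp [ha], Reachable.refl _⟩
      obtain ⟨y, hy, hry⟩ := this
      have : G'.Reachable y v := reach_mem _ (mem_G' _ b.2) y v hy (by simp [hb])
      exact hry.trans this
    -- G' is connected, contradiction
    apply hbridge
    haveI : Nonempty V := ⟨u⟩
    refine ⟨fun c d => ?_⟩
    obtain ⟨p⟩ := hG.preconnected c d
    induction p with
    | nil => exact Reachable.refl _
    | @cons y z d' h p ih =>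
      refine Reachable.trans ?_ ih
      by_cases hyz : (s(y, z) : Sym2 V) = s(u, v)
      · rw [Sym2.eq_iff] at hyz
        rcases hyz with ⟨rfl, rfl⟩ | ⟨rfl, rfl⟩
        · exact huv'
        · exact huv'.symm
      · exact (SimpleGraph.Adj.reachable (by simp [hG', SimpleGraph.deleteEdges_adj, h, hyz]))
  refine ⟨key, ?_⟩
  rintro ⟨-, h2⟩
  have := h2 ⟨s(u, v), huv⟩
  have hset : {y : G.edgeSet | y ≠ ⟨s(u, v), huv⟩} =
      {f : G.edgeSet | (f : Sym2 V) ≠ s(u, v)} := by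
    ext f
    simp [Subtype.ext_iff]
  rw [hset] at this
  exact key this
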